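/- Let $Q(z)=(2m+1)z^{2m}+(-1)^m\sum_{j=1}^m(z^{2m-2j}+z^{2m+2j})$ and write $Q(z)=(-1)^m\prod_{j=1}^{2m}(z-\alpha_j)(z+\alpha_j)$ where $P(z)=\prod_{j=1}^{2m}(z-\alpha_j)$ is monic with $Q(z)=(-1)^mP(z)P(-z)$. Let $S_\mu=\sum_{j=1}^{2m}(\alpha_j^\mu+(-\alpha_j)^\mu)$. Then $S_2=S_4=\cdots=S_{2m-2}=-2$. -/

import Mathlib

open Finset Polynomial

theorem stmt10 (m : ℕ) (hm : 2 ≤ m) (α : Fin (2 * m) → ℂ)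
    (hfact : C ((-1 : ℂ) ^ m) * ((∏ j, (X - C (α j))) * (∏ j, (X - C (α j))).comp (-X)) =
      C ((2 * m + 1 : ℂ)) * X ^ (2 * m) +
        C ((-1 : ℂ) ^ m) * ∑ j ∈ Icc 1 m, (X ^ (2 * m - 2 * j) + X ^ (2 * m + 2 * j)))
    (S : ℕ → ℂ) (hS : ∀ μ, S μ = ∑ j, ((α j) ^ μ + (-(α j)) ^ μ)) :
    ∀ k, 1 ≤ k → k ≤ m - 1 → S (2 * k) = -2 := by
  classical
  set γ : Fin (2*m) ⊕ Fin (2*m) → ℂ := Sum.elim α (fun j => -(α j)) with hγ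
  set F : ℂ[X] := ∏ i, (X - C (γ i)) with hFdef
  have hcomp : (∏ j, (X - C (α j))).comp (-X : ℂ[X]) = ∏ j, (X + C (α j)) := by
    rw [Polynomial.prod_comp]
    simp only [Polynomial.sub_comp, Polynomial.X_comp, Polynomial.C_comp]
    have h : ∀ j : Fin (2*m), (-X - C (α j) : ℂ[X]) = (-1) * (X + C (α j)) := by intro j; ring
    rw [Finset.prod_congr rfl (fun j _ => h j), Finset.prod_mul_distrib, Finset.prod_const,
      card_univ, Fintype.card_fin, Even.neg_one_pow (even_two_mul m), one_mul]
  have hprod : F = (∏ j, (X - C (α j))) * (∏ j, (X - C (α j))).comp (-X) := by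
    rw [hcomp, hFdef, Fintype.prod_sum_type]
    simp [hγ, sub_neg_eq_add]
  have hCC : (C ((-1:ℂ)^m)) * (C ((-1:ℂ)^m)) = 1 := by
    rw [← C_mul, ← pow_add, Even.neg_one_pow ⟨m, rfl⟩, map_one]
  have hF : F = C ((-1:ℂ)^m) * (C ((2 * m + 1 : ℂ)) * X ^ (2 * m) +
      C ((-1 : ℂ) ^ m) * ∑ j ∈ Icc 1 m, (X ^ (2 * m - 2 * j) + X ^ (2 * m + 2 * j))) := by
    rw [← hfact, ← hprod, ← mul_assoc, hCC, one_mul]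
  set E : ℕ → ℂ := fun i => (Finset.univ.val.map γ).esymm i with hEdef
  have hms : Multiset.card (Finset.univ.val.map γ) = 4 * m := by
    simp [Multiset.card_map]; ring
  have hFm : F = ((Finset.univ.val.map γ).map (fun t => X - C t)).prod := by
    rw [Multiset.map_map]; rfl
  have hFcoeff : ∀ i ≤ 4*m, F.coeff (4*m - i) = (-1:ℂ)^i * E i := by
    intro i hi
    have h1 : (4*m - i) ≤ Multiset.card (Finset.univ.val.map γ) := by omega
    have := Multiset.prod_X_sub_C_coeff (Finset.univ.val.map γ) h1
    rw [← hFm] at this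
    have h2 : 4*m - (4*m - i) = i := by omega
    rw [this, hms, h2]
  have hE : ∀ i, 1 ≤ i → i ≤ 2*m-2 → E i = if Even i then 1 else 0 := by
    intro i hi1 hi2
    have hc := hFcoeff i (by omega)
    rw [hF] at hc
    simp only [coeff_C_mul, coeff_add, coeff_X_pow, finset_sum_coeff] at hc
    have hifA : (if (4*m - i : ℕ) = 2*m then (1:ℂ) else 0) = 0 := if_neg (by omega)
    have hsumv : ∑ j ∈ Icc 1 m, ((if (4*m - i : ℕ) = 2*m - 2*j then (1:ℂ) else 0) +
        if (4*m - i : ℕ) = 2*m + 2*j then (1:ℂ) else 0) = if Even i then 1 else 0 := by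
      by_cases hpar : Even i
      · obtain ⟨t, ht⟩ := hpar
        rw [if_pos ⟨t, ht⟩]
        rw [Finset.sum_eq_single (m - t)]
        · rw [if_neg (by omega), if_pos (by omega)]; ring
        · intro j hj hne
          simp only [Finset.mem_Icc] at hj
          rw [if_neg (by omega), if_neg (by omega)]; ring
        · intro h
          exact absurd (Finset.mem_Icc.mpr (by omega)) h
      · rw [if_neg hpar]
        rw [Nat.even_iff] at hpar
        apply Finset.sum_eq_zero
        intro j hj
        simp only [Finset.mem_Icc] at hj
        rw [if_neg (by omega), if_neg (by omega)]; ring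
    rw [hifA, hsumv] at hc
    have hinv : ((-1:ℂ)^i) * ((-1:ℂ)^i) = 1 := by
      rw [← pow_add]; exact Even.neg_one_pow ⟨i, rfl⟩
    have hEi : E i = (-1:ℂ)^i * ((-1:ℂ)^m * ((2 * ↑m + 1) * 0 + (-1:ℂ)^m * if Even i then 1 else 0)) := by
      calc E i = ((-1:ℂ)^i * (-1:ℂ)^i) * E i := by rw [hinv, one_mul]
      _ = (-1:ℂ)^i * ((-1:ℂ)^i * E i) := by ring
      _ = _ := by rw [← hc]
    rw [hEi]
    have hmm : ((-1:ℂ)^m) * ((-1:ℂ)^m) = 1 := by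
      rw [← pow_add]; exact Even.neg_one_pow ⟨m, rfl⟩
    by_cases hpar : Even i
    · rw [if_pos hpar, Even.neg_one_pow hpar]
      calc (1:ℂ) * ((-1:ℂ)^m * ((2 * ↑m + 1) * 0 + (-1:ℂ)^m * 1)) = ((-1:ℂ)^m) * ((-1:ℂ)^m) := by ring
      _ = 1 := hmm
    · rw [if_neg hpar]; ring
  have hSsum : ∀ μ, S μ = ∑ i : Fin (2*m) ⊕ Fin (2*m), γ i ^ μ := by
    intro μ
    rw [hS μ, Fintype.sum_sum_type, Finset.sum_add_distrib]
    simp [hγ]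
  have hNewton : ∀ k, 0 < k → S k = (-1:ℂ)^(k+1) * k * E k -
      ∑ a ∈ (antidiagonal k).filter (fun a => a.1 ∈ Set.Ioo 0 k),
        (-1:ℂ)^a.1 * E a.1 * S a.2 := by
    intro k hk
    have hNI := congrArg (MvPolynomial.aeval γ)
      (MvPolynomial.psum_eq_mul_esymm_sub_sum (Fin (2*m) ⊕ Fin (2*m)) ℂ k hk)
    simp only [map_sub, map_mul, map_sum, map_pow, map_neg, map_one, map_natCast,
      MvPolynomial.aeval_esymm_eq_multiset_esymm, MvPolynomial.psum, MvPolynomial.aeval_X] at hNI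
    rw [hSsum k, hNI]
    simp only [hEdef]
    congr 1
    apply Finset.sum_congr rfl
    intro a _
    rw [hSsum a.2]
  intro k
  induction k using Nat.strong_induction_on with
  | _ k IH =>
    intro hk1 hk2
    have hNk := hNewton (2*k) (by omega)
    have hE2k : E (2*k) = 1 := by
      rw [hE (2*k) (by omega) (by omega), if_pos (even_two_mul k)]
    have hsum : ∑ a ∈ (antidiagonal (2*k)).filter (fun a => a.1 ∈ Set.Ioo 0 (2*k)),
        (-1:ℂ)^a.1 * E a.1 * S a.2 = ((k-1 : ℕ) : ℂ) * (-2) := by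
      rw [← Finset.sum_subset (s₁ := (Icc 1 (k-1)).image (fun t => (2*t, 2*k - 2*t)))]
      · rw [Finset.sum_image (by intro a _ b _ h; have := congrArg Prod.fst h; simp at this; omega)]
        have hterm : ∀ t ∈ Icc 1 (k-1),
            (-1:ℂ)^(2*t) * E (2*t) * S (2*k - 2*t) = -2 := by
          intro t ht
          simp only [Finset.mem_Icc] at ht
          have h1 : (-1:ℂ)^(2*t) = 1 := Even.neg_one_pow (even_two_mul t)
          have h2 : E (2*t) = 1 := by
            rw [hE (2*t) (by omega) (by omega), if_pos (even_two_mul t)]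
          have h3 : 2*k - 2*t = 2*(k-t) := by omega
          rw [h1, h2, h3, IH (k-t) (by omega) (by omega) (by omega)]; ring
        rw [Finset.sum_congr rfl hterm, Finset.sum_const, Nat.card_Icc, nsmul_eq_mul]
        have : k - 1 + 1 - 1 = k - 1 := by omega
        rw [this]
      · intro a ha
        simp only [Finset.mem_image, Finset.mem_Icc] at ha
        obtain ⟨t, ht, rfl⟩ := ha
        simp only [Finset.mem_filter, Finset.HasAntidiagonal.mem_antidiagonal, Set.mem_Ioo]
        omega
      · intro a ha hna
        simp only [Finset.mem_filter, Finset.HasAntidiagonal.mem_antidiagonal, Set.mem_Ioo] at ha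
        obtain ⟨hsum', h0, hlt⟩ := ha
        by_cases hpar : Even a.1
        · exfalso
          obtain ⟨t, ht⟩ := hpar
          apply hna
          simp only [Finset.mem_image, Finset.mem_Icc]
          exact ⟨t, by omega, by rw [Prod.ext_iff]; constructor <;> simp <;> omega⟩
        · rw [hE a.1 (by omega) (by omega), if_neg hpar]; ring
    rw [hE2k, hsum] at hNk
    have hodd : (-1:ℂ)^(2*k+1) = -1 := Odd.neg_one_pow ⟨k, rfl⟩
    rw [hodd] at hNk
    rw [hNk]
    have : ((k-1:ℕ):ℂ) = (k:ℂ) - 1 := by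
      rw [Nat.cast_sub hk1]; norm_num
    rw [this]
    push_cast
    ring
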